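/- arXiv:1502.00999 — 2 statements merged into one kernel-verified Lean document; each statement's English description precedes it below -/
import Mathlib

section
/- The function (φ,ψ) : [0,∞] × D → D², defined for finite κ by ψ_κ(x)(t) = sup_{0≤s≤t}(x(s) − κ)⁺ and φ_κ(x)(t) = x(t) − ψ_κ(x)(t), and for κ = ∞ by (φ_∞, ψ_∞) = (identity, 0), is continuous with respect to the product topology when [0,∞] is equipped with the order topology and D is equipped with the topology of uniform convergence over bounded intervals. -/
open MeasureTheory Filter Set
open scoped ENNReal

noncomputable section

/-- `f` is càdlàg on `[0,∞)`: right-continuous at every `t ≥ 0` and possessing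
finite left limits at every `t > 0`.  (Values on `(-∞,0)` are irrelevant.) -/
def Cadlag (f : ℝ → ℝ) : Prop :=
  (∀ t : ℝ, 0 ≤ t → ContinuousWithinAt f (Set.Ici t) t) ∧
    (∀ t : ℝ, 0 < t → ∃ L : ℝ, Filter.Tendsto f (nhdsWithin t (Set.Iio t)) (nhds L))

/-- Uniform norm of `x` on `[0,t]`: `‖x‖_t = sup_{0 ≤ s ≤ t} |x(s)|`. -/
def unif (x : ℝ → ℝ) (t : ℝ) : ℝ := ⨆ s : Set.Icc (0:ℝ) t, |x s.1|

/-- Regulator of the one-sided reflection map with upper barrier `κ ∈ ℝ`: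
`ψ_κ(x)(t) = sup_{0 ≤ s ≤ t} (x(s) - κ)⁺`. -/
def psiR (κ : ℝ) (x : ℝ → ℝ) (t : ℝ) : ℝ := ⨆ s : Set.Icc (0:ℝ) t, max (x s.1 - κ) 0

/-- One-sided reflection map with upper barrier `κ ∈ ℝ`: `φ_κ(x) = x - ψ_κ(x)`. -/
def phiR (κ : ℝ) (x : ℝ → ℝ) (t : ℝ) : ℝ := x t - psiR κ x t

/-- Regulator for a barrier `κ ∈ [0,∞]`; for `κ = ∞` it is identically `0`. -/
def psiE (κ : ℝ≥0∞) (x : ℝ → ℝ) : ℝ → ℝ := if κ = ⊤ then 0 else psiR κ.toReal x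

/-- Reflection map for a barrier `κ ∈ [0,∞]`; for `κ = ∞` it is the identity. -/
def phiE (κ : ℝ≥0∞) (x : ℝ → ℝ) : ℝ → ℝ := if κ = ⊤ then x else phiR κ.toReal x

/-- "`∫ 𝟙_S du = 0`": every Stieltjes function agreeing with the
(constant-below-zero extension of) `u` assigns measure zero to `S`. -/
def ZeroStieltjesOn (u : ℝ → ℝ) (S : Set ℝ) : Prop :=
  ∀ sf : StieltjesFunction ℝ, (∀ t : ℝ, sf t = u (max t 0)) → sf.measure S = 0

/-- `u₁, u₂` is a valid pair of regulator processes for `x₁` (barrier `0` from above)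
and `x₂` (upper barrier `B ∈ [0,∞]`): nondecreasing nonnegative elements of `D` with
`∫₀^∞ 𝟙{x₁(t) < 0} du₁(t) = 0` and `∫₀^∞ 𝟙{x₂(t) < B} du₂(t) = 0`. -/
def IsRegulator (B : ℝ≥0∞) (x₁ x₂ u₁ u₂ : ℝ → ℝ) : Prop :=
  Cadlag u₁ ∧ Cadlag u₂ ∧ MonotoneOn u₁ (Set.Ici 0) ∧ MonotoneOn u₂ (Set.Ici 0) ∧
    (∀ t ≥ (0:ℝ), 0 ≤ u₁ t) ∧ (∀ t ≥ (0:ℝ), 0 ≤ u₂ t) ∧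
    ZeroStieltjesOn u₁ {t | 0 ≤ t ∧ x₁ t < 0} ∧
    ZeroStieltjesOn u₂ {t | 0 ≤ t ∧ ENNReal.ofReal (x₂ t) < B}

lemma unif_le {f : ℝ → ℝ} {t c : ℝ} (ht : 0 ≤ t)
    (h : ∀ s ∈ Icc (0:ℝ) t, |f s| ≤ c) : unif f t ≤ c := by
  haveI : Nonempty (Icc (0:ℝ) t) := ⟨⟨0, le_refl 0, ht⟩⟩
  exact ciSup_le fun s => h s.1 s.2

lemma unif_nonneg (f : ℝ → ℝ) (t : ℝ) : 0 ≤ unif f t :=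
  Real.iSup_nonneg fun s => abs_nonneg _

lemma le_unif {f : ℝ → ℝ} {t : ℝ} (hb : ∃ M, ∀ s ∈ Icc (0:ℝ) t, |f s| ≤ M)
    {s : ℝ} (hs : s ∈ Icc (0:ℝ) t) : |f s| ≤ unif f t := by
  obtain ⟨M, hM⟩ := hb
  exact le_ciSup ⟨M, by rintro y ⟨u, rfl⟩; exact hM u.1 u.2⟩ (⟨s, hs⟩ : Icc (0:ℝ) t)

lemma unif_congr {f g : ℝ → ℝ} {t : ℝ} (h : ∀ s ∈ Icc (0:ℝ) t, f s = g s) :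
    unif f t = unif g t := by
  unfold unif
  congr 1
  ext s
  rw [h s.1 s.2]

lemma psiR_nonneg (κ : ℝ) (x : ℝ → ℝ) (t : ℝ) : 0 ≤ psiR κ x t :=
  Real.iSup_nonneg fun s => le_max_right _ _

lemma psiR_bdd {κ : ℝ} {x : ℝ → ℝ} {t M : ℝ} (hM : ∀ s ∈ Icc (0:ℝ) t, |x s| ≤ M) :
    BddAbove (range fun s : Icc (0:ℝ) t => max (x s.1 - κ) 0) := by
  refine ⟨max (M + |κ|) 0, ?_⟩
  rintro y ⟨u, rfl⟩
  refine max_le_max ?_ le_rfl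
  have := hM u.1 u.2
  have h1 : x u.1 ≤ |x u.1| := le_abs_self _
  have h2 : -κ ≤ |κ| := neg_le_abs κ
  linarith

lemma psiR_sub_le {κ₁ κ₂ : ℝ} {x₁ x₂ : ℝ → ℝ} {t a : ℝ} (ht : 0 ≤ t)
    {M₁ M₂ : ℝ} (hM₁ : ∀ s ∈ Icc (0:ℝ) t, |x₁ s| ≤ M₁)
    (hM₂ : ∀ s ∈ Icc (0:ℝ) t, |x₂ s| ≤ M₂)
    (h : ∀ s ∈ Icc (0:ℝ) t, |x₁ s - x₂ s| ≤ a) :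
    |psiR κ₁ x₁ t - psiR κ₂ x₂ t| ≤ a + |κ₁ - κ₂| := by
  haveI : Nonempty (Icc (0:ℝ) t) := ⟨⟨0, le_refl 0, ht⟩⟩
  rw [abs_sub_le_iff]
  constructor
  · rw [sub_le_iff_le_add]
    refine ciSup_le fun s => ?_
    have hle : max (x₂ s.1 - κ₂) 0 ≤ psiR κ₂ x₂ t := le_ciSup (psiR_bdd hM₂) s
    have hd : |x₁ s.1 - x₂ s.1| ≤ a := h s.1 s.2
    have : x₁ s.1 - κ₁ ≤ max (x₂ s.1 - κ₂) 0 + (a + |κ₁ - κ₂|) := by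
      have h1 : x₂ s.1 - κ₂ ≤ max (x₂ s.1 - κ₂) 0 := le_max_left _ _
      have h2 : x₁ s.1 - x₂ s.1 ≤ a := (le_abs_self _).trans hd
      have h3 : κ₂ - κ₁ ≤ |κ₁ - κ₂| := by
        rw [abs_sub_comm]; exact le_abs_self _
      linarith
    have h0 : (0:ℝ) ≤ max (x₂ s.1 - κ₂) 0 + (a + |κ₁ - κ₂|) := by
      have := abs_nonneg (x₁ s.1 - x₂ s.1)
      have := abs_nonneg (κ₁ - κ₂)
      have := le_max_right (x₂ s.1 - κ₂) (0:ℝ)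
      linarith
    have hmx : max (x₁ s.1 - κ₁) 0 ≤ max (x₂ s.1 - κ₂) 0 + (a + |κ₁ - κ₂|) := max_le this h0
    linarith
  · rw [sub_le_iff_le_add]
    refine ciSup_le fun s => ?_
    have hle : max (x₁ s.1 - κ₁) 0 ≤ psiR κ₁ x₁ t := le_ciSup (psiR_bdd hM₁) s
    have hd : |x₁ s.1 - x₂ s.1| ≤ a := h s.1 s.2
    have : x₂ s.1 - κ₂ ≤ max (x₁ s.1 - κ₁) 0 + (a + |κ₁ - κ₂|) := by
      have h1 : x₁ s.1 - κ₁ ≤ max (x₁ s.1 - κ₁) 0 := le_max_left _ _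
      have h2 : x₂ s.1 - x₁ s.1 ≤ a := by
        have := neg_abs_le (x₁ s.1 - x₂ s.1); linarith
      have h3 : κ₁ - κ₂ ≤ |κ₁ - κ₂| := le_abs_self _
      linarith
    have h0 : (0:ℝ) ≤ max (x₁ s.1 - κ₁) 0 + (a + |κ₁ - κ₂|) := by
      have := abs_nonneg (x₁ s.1 - x₂ s.1)
      have := abs_nonneg (κ₁ - κ₂)
      have := le_max_right (x₁ s.1 - κ₁) (0:ℝ)
      linarith
    have hmx : max (x₂ s.1 - κ₂) 0 ≤ max (x₁ s.1 - κ₁) 0 + (a + |κ₁ - κ₂|) := max_le this h0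
    linarith

lemma Cadlag.bound {f : ℝ → ℝ} (hf : Cadlag f) (t : ℝ) :
    ∃ M, ∀ s ∈ Icc (0:ℝ) t, |f s| ≤ M := by
  rcases lt_or_ge t 0 with ht | ht
  · exact ⟨0, fun s hs => absurd (hs.1.trans hs.2) (not_le.mpr ht)⟩
  have key : ∀ s ∈ Icc (0:ℝ) t, ∃ δ > 0, ∃ M, ∀ u ∈ Icc (0:ℝ) t, dist u s < δ → |f u| ≤ M := by
    intro s hs
    obtain ⟨δ₁, hδ₁, h₁⟩ : ∃ δ > 0, ∀ ⦃u : ℝ⦄, dist u s < δ → u ∈ Ici s → |f u| ≤ |f s| + 1 := by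
      have h := Metric.tendsto_nhds.mp (hf.1 s hs.1) 1 one_pos
      rw [eventually_nhdsWithin_iff, Metric.eventually_nhds_iff] at h
      obtain ⟨ε, hε, hh⟩ := h
      refine ⟨ε, hε, fun u hu hmem => ?_⟩
      have hd := hh hu hmem
      rw [Real.dist_eq] at hd
      have : |f u| ≤ |f u - f s| + |f s| := by
        calc |f u| = |f u - f s + f s| := by ring_nf
          _ ≤ |f u - f s| + |f s| := abs_add_le _ _
      linarith
    rcases eq_or_lt_of_le hs.1 with heq | hpos
    · refine ⟨δ₁, hδ₁, |f s| + 1, fun u hu hd => h₁ hd ?_⟩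
      rw [← heq]; exact hu.1
    · obtain ⟨L, hL⟩ := hf.2 s hpos
      obtain ⟨δ₂, hδ₂, h₂⟩ : ∃ δ > 0, ∀ ⦃u : ℝ⦄, dist u s < δ → u ∈ Iio s → |f u| ≤ |L| + 1 := by
        have h := Metric.tendsto_nhds.mp hL 1 one_pos
        rw [eventually_nhdsWithin_iff, Metric.eventually_nhds_iff] at h
        obtain ⟨ε, hε, hh⟩ := h
        refine ⟨ε, hε, fun u hu hmem => ?_⟩
        have hd := hh hu hmem
        rw [Real.dist_eq] at hd
        have : |f u| ≤ |f u - L| + |L| := by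
          calc |f u| = |f u - L + L| := by ring_nf
            _ ≤ |f u - L| + |L| := abs_add_le _ _
        linarith
      refine ⟨min δ₁ δ₂, lt_min hδ₁ hδ₂, max (|f s| + 1) (|L| + 1), fun u _ hd => ?_⟩
      rcases lt_or_ge u s with hlt | hge
      · exact (h₂ (hd.trans_le (min_le_right _ _)) hlt).trans (le_max_right _ _)
      · exact (h₁ (hd.trans_le (min_le_left _ _)) hge).trans (le_max_left _ _)
  choose δ hδ M hM using key
  obtain ⟨fs, hfs⟩ := isCompact_Icc.elim_nhds_subcover'
    (fun s hs => Metric.ball s (δ s hs)) (fun s hs => Metric.ball_mem_nhds _ (hδ s hs))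
  rcases fs.eq_empty_or_nonempty with rfl | hne
  · exfalso
    have h0 : (0:ℝ) ∈ Icc (0:ℝ) t := ⟨le_refl 0, ht⟩
    have := hfs h0
    simp at this
  · refine ⟨fs.sup' hne (fun s => M s.1 s.2), fun u hu => ?_⟩
    have := hfs hu
    simp only [mem_iUnion] at this
    obtain ⟨s, hsfs, hball⟩ := this
    exact (hM s.1 s.2 u hu (by simpa using hball)).trans (Finset.le_sup' (fun u : Icc (0:ℝ) t => M u.1 u.2) hsfs)

lemma unif_zero {t : ℝ} (ht : 0 ≤ t) : unif (fun _ => (0:ℝ)) t = 0 :=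
  le_antisymm (unif_le ht (by simp)) (unif_nonneg _ _)

/-- **Continuity of the one-sided reflection map `(φ,ψ) : [0,∞] × D → D²`**
(with the order topology on `[0,∞]` and the topology of uniform convergence on
bounded intervals on `D`): if `κₙ → κ` in `[0,∞]` and `xₙ → x` in `D`, then
`φ_{κₙ}(xₙ) → φ_κ(x)` and `ψ_{κₙ}(xₙ) → ψ_κ(x)` in `D`. -/
theorem reflection_map_continuous
    (κs : ℕ → ℝ≥0∞) (κ : ℝ≥0∞) (xs : ℕ → ℝ → ℝ) (x : ℝ → ℝ)
    (hxs : ∀ n, Cadlag (xs n)) (hx : Cadlag x)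
    (hκ : Tendsto κs atTop (nhds κ))
    (hxconv : ∀ t ≥ (0:ℝ),
      Tendsto (fun n => unif (fun s => xs n s - x s) t) atTop (nhds 0)) :
    (∀ t ≥ (0:ℝ),
      Tendsto (fun n => unif (fun s => phiE (κs n) (xs n) s - phiE κ x s) t)
        atTop (nhds 0)) ∧
    (∀ t ≥ (0:ℝ),
      Tendsto (fun n => unif (fun s => psiE (κs n) (xs n) s - psiE κ x s) t)
        atTop (nhds 0)) := by
  by_cases hκtop : κ = ⊤
  · subst hκtop
    have hpsi0 : ∀ t ≥ (0:ℝ), ∀ᶠ n in atTop, ∀ s ∈ Icc (0:ℝ) t,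
        psiE (κs n) (xs n) s = 0 := by
      intro t ht
      obtain ⟨M₀, hM₀⟩ := hx.bound t
      have hM' : ∀ s ∈ Icc (0:ℝ) t, |x s| ≤ max M₀ 0 :=
        fun s hs => (hM₀ s hs).trans (le_max_left _ _)
      set M := max M₀ 0 with hMdef
      have hMnn : (0:ℝ) ≤ M := le_max_right _ _
      have h1 : ∀ᶠ n in atTop, ENNReal.ofReal (M + 1) < κs n :=
        hκ (Ioi_mem_nhds ENNReal.ofReal_lt_top)
      have h2 : ∀ᶠ n in atTop, unif (fun s => xs n s - x s) t < 1 :=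
        (hxconv t ht).eventually_lt_const one_pos
      filter_upwards [h1, h2] with n hn1 hn2
      intro s hs
      by_cases hn : κs n = ⊤
      · simp [psiE, hn]
      · simp only [psiE, if_neg hn]
        obtain ⟨Mn, hMn⟩ := (hxs n).bound t
        have hκn : M + 1 < (κs n).toReal :=
          (ENNReal.ofReal_lt_iff_lt_toReal (by linarith) hn).mp hn1
        haveI : Nonempty (Icc (0:ℝ) s) := ⟨⟨0, le_refl 0, hs.1⟩⟩
        refine le_antisymm (ciSup_le fun u => ?_) (psiR_nonneg _ _ _)
        have hu : u.1 ∈ Icc (0:ℝ) t := ⟨u.2.1, u.2.2.trans hs.2⟩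
        have hdb : ∃ M', ∀ v ∈ Icc (0:ℝ) t, |xs n v - x v| ≤ M' := by
          refine ⟨Mn + M, fun v hv => ?_⟩
          have h5 := abs_sub (xs n v) (x v)
          have := hMn v hv
          have := hM' v hv
          linarith
        have h4 : |xs n u.1 - x u.1| ≤ unif (fun v => xs n v - x v) t := le_unif hdb hu
        have hxu : xs n u.1 ≤ M + 1 := by
          have := hM' u.1 hu
          have h5 : xs n u.1 - x u.1 ≤ |xs n u.1 - x u.1| := le_abs_self _
          have h6 : x u.1 ≤ |x u.1| := le_abs_self _
          linarith
        exact max_le (by linarith) le_rfl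
    constructor
    · intro t ht
      have heq : ∀ᶠ n in atTop, unif (fun s => xs n s - x s) t
          = unif (fun s => phiE (κs n) (xs n) s - phiE ⊤ x s) t := by
        filter_upwards [hpsi0 t ht] with n hn
        refine (unif_congr fun s hs => ?_).symm
        by_cases hn' : κs n = ⊤
        · simp [phiE, hn']
        · have h0 := hn s hs
          simp only [psiE, if_neg hn'] at h0
          simp [phiE, phiR, hn', h0]
      exact Tendsto.congr' heq (hxconv t ht)
    · intro t ht
      have heq : (fun _ : ℕ => (0:ℝ)) =ᶠ[atTop]
          (fun n => unif (fun s => psiE (κs n) (xs n) s - psiE ⊤ x s) t) := by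
        filter_upwards [hpsi0 t ht] with n hn
        have : unif (fun s => psiE (κs n) (xs n) s - psiE ⊤ x s) t
            = unif (fun _ => (0:ℝ)) t := by
          refine unif_congr fun s hs => ?_
          rw [hn s hs]
          simp [psiE]
        rw [this, unif_zero ht]
      exact Tendsto.congr' heq tendsto_const_nhds
  · have hκR : Tendsto (fun n => (κs n).toReal) atTop (nhds κ.toReal) :=
      (ENNReal.tendsto_toReal hκtop).comp hκ
    have hκ0 : Tendsto (fun n => |(κs n).toReal - κ.toReal|) atTop (nhds 0) := by
      have := (hκR.sub_const κ.toReal).abs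
      simpa using this
    have hntop : ∀ᶠ n in atTop, κs n ≠ ⊤ := by
      have : ∀ᶠ n in atTop, κs n < ⊤ := hκ (Iio_mem_nhds (lt_top_iff_ne_top.mpr hκtop))
      exact this.mono fun n h => h.ne
    have key : ∀ t ≥ (0:ℝ), ∀ᶠ n in atTop, ∀ s ∈ Icc (0:ℝ) t,
        |psiE (κs n) (xs n) s - psiE κ x s|
          ≤ unif (fun u => xs n u - x u) t + |(κs n).toReal - κ.toReal| := by
      intro t ht
      obtain ⟨M, hM⟩ := hx.bound t
      filter_upwards [hntop] with n hn s hs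
      obtain ⟨Mn, hMn⟩ := (hxs n).bound t
      have hdb : ∃ M', ∀ v ∈ Icc (0:ℝ) t, |xs n v - x v| ≤ M' := by
        refine ⟨Mn + M, fun v hv => ?_⟩
        have h5 := abs_sub (xs n v) (x v)
        have := hMn v hv
        have := hM v hv
        linarith
      simp only [psiE, if_neg hn, if_neg hκtop]
      refine psiR_sub_le hs.1 (fun u hu => hMn u ⟨hu.1, hu.2.trans hs.2⟩)
        (fun u hu => hM u ⟨hu.1, hu.2.trans hs.2⟩) (fun u hu => ?_)
      exact le_unif hdb ⟨hu.1, hu.2.trans hs.2⟩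
    have hbd : ∀ (n : ℕ) t, 0 ≤ t → ∃ M', ∀ v ∈ Icc (0:ℝ) t, |xs n v - x v| ≤ M' := by
      intro n t ht
      obtain ⟨M, hM⟩ := hx.bound t
      obtain ⟨Mn, hMn⟩ := (hxs n).bound t
      refine ⟨Mn + M, fun v hv => ?_⟩
      have h5 := abs_sub (xs n v) (x v)
      have := hMn v hv
      have := hM v hv
      linarith
    constructor
    · intro t ht
      have hg : Tendsto (fun n => 2 * unif (fun u => xs n u - x u) t
          + |(κs n).toReal - κ.toReal|) atTop (nhds 0) := by
        have := ((hxconv t ht).const_mul 2).add hκ0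
        simpa using this
      refine squeeze_zero' (Eventually.of_forall fun n => unif_nonneg _ _) ?_ hg
      filter_upwards [key t ht, hntop] with n hn hn'
      refine unif_le ht fun s hs => ?_
      have h1 := hn s hs
      simp only [psiE, if_neg hn', if_neg hκtop] at h1
      simp only [phiE, if_neg hn', if_neg hκtop, phiR]
      have h2 : |xs n s - x s| ≤ unif (fun u => xs n u - x u) t :=
        le_unif (hbd n t ht) hs
      have h3 : (xs n s - psiR (κs n).toReal (xs n) s) - (x s - psiR κ.toReal x s)
          = (xs n s - x s) - (psiR (κs n).toReal (xs n) s - psiR κ.toReal x s) := by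
        ring
      rw [h3]
      have h4 := abs_sub (xs n s - x s)
        (psiR (κs n).toReal (xs n) s - psiR κ.toReal x s)
      linarith
    · intro t ht
      have hg : Tendsto (fun n => unif (fun u => xs n u - x u) t
          + |(κs n).toReal - κ.toReal|) atTop (nhds 0) := by
        have := (hxconv t ht).add hκ0
        simpa using this
      refine squeeze_zero' (Eventually.of_forall fun n => unif_nonneg _ _) ?_ hg
      filter_upwards [key t ht] with n hn
      exact unif_le ht fun s hs => hn s hs
end
end

section
/- For all x, x' ∈ D, κ, κ' ∈ ℝ, and t ≥ 0, the one-sided reflection maps satisfy ‖ψ_κ(x) − ψ_{κ'}(x')‖_t ≤ ‖x − x'‖_t + |κ − κ'| and ‖φ_κ(x) − φ_{κ'}(x')‖_t ≤ 2‖x − x'‖_t + |κ − κ'|. In particular, for κ = κ' the maps ψ_κ and φ_κ are Lipschitz continuous in the uniform norm on [0,t] with constants 1 and 2 respectively. -/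
open MeasureTheory Filter Set
open scoped ENNReal

noncomputable section

/-- A càdlàg function is bounded on `[0,t]`. -/
theorem cadlag_bdd (f : ℝ → ℝ)
    (hf : Cadlag f)
    (t : ℝ) : ∃ M : ℝ, ∀ s ∈ Set.Icc (0:ℝ) t, |f s| ≤ M := by
  have key : ∀ s ∈ Set.Icc (0:ℝ) t, ∃ M : ℝ, ∀ᶠ u in nhdsWithin s (Set.Icc 0 t), |f u| ≤ M := by
    intro s hs
    have hr : ∀ᶠ u in nhdsWithin s (Set.Ici s), |f u| ≤ |f s| + 1 := by
      have := (hf.1 s hs.1).tendsto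
      have h2 : ∀ᶠ u in nhdsWithin s (Set.Ici s), f u ∈ Set.Ioo (f s - 1) (f s + 1) :=
        this (Ioo_mem_nhds (by linarith) (by linarith))
      filter_upwards [h2] with u hu
      rw [abs_le]
      constructor <;> [nlinarith [hu.1, neg_abs_le (f s)]; nlinarith [hu.2, le_abs_self (f s)]]
    rcases eq_or_lt_of_le hs.1 with h0 | h0
    · refine ⟨|f s| + 1, ?_⟩
      have : nhdsWithin s (Set.Icc 0 t) ≤ nhdsWithin s (Set.Ici s) := by
        apply nhdsWithin_mono
        rw [← h0]; exact Set.Icc_subset_Ici_self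
      exact this hr
    · obtain ⟨L, hL⟩ := hf.2 s h0
      have hl : ∀ᶠ u in nhdsWithin s (Set.Iio s), |f u| ≤ |L| + 1 := by
        have h2 : ∀ᶠ u in nhdsWithin s (Set.Iio s), f u ∈ Set.Ioo (L - 1) (L + 1) :=
          hL (Ioo_mem_nhds (by linarith) (by linarith))
        filter_upwards [h2] with u hu
        rw [abs_le]
        constructor <;> [nlinarith [hu.1, neg_abs_le L]; nlinarith [hu.2, le_abs_self L]]
      refine ⟨max (|f s| + 1) (|L| + 1), ?_⟩
      have hnhds : ∀ᶠ u in nhds s, |f u| ≤ max (|f s| + 1) (|L| + 1) := by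
        have hcov : nhds s = nhdsWithin s (Set.Iio s) ⊔ nhdsWithin s (Set.Ici s) := by
          rw [← nhdsWithin_union, Set.Iio_union_Ici, nhdsWithin_univ]
        rw [hcov]
        rw [eventually_sup]
        exact ⟨hl.mono fun u hu => hu.trans (le_max_right _ _),
          hr.mono fun u hu => hu.trans (le_max_left _ _)⟩
      exact nhdsWithin_le_nhds hnhds
  -- extract neighborhoods
  have key2 : ∀ s ∈ Set.Icc (0:ℝ) t, ∃ V ∈ nhds s, ∃ M : ℝ,
      ∀ u ∈ V ∩ Set.Icc (0:ℝ) t, |f u| ≤ M := by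
    intro s hs
    obtain ⟨M, hM⟩ := key s hs
    rw [eventually_nhdsWithin_iff] at hM
    obtain ⟨V, hV, hVo, hVs⟩ := eventually_nhds_iff.mp hM
    exact ⟨V, hVo.mem_nhds hVs, M, fun u hu => hV u hu.1 hu.2⟩
  choose! V hV M hM using key2
  rcases lt_or_ge t 0 with htneg | ht0
  · exact ⟨0, fun s hs => absurd (hs.1.trans hs.2) (not_le.mpr htneg)⟩
  obtain ⟨S, hcov⟩ := isCompact_Icc.elim_nhds_subcover' (fun s hs => V s)
    (fun s hs => hV s hs)
  have h0mem : (0:ℝ) ∈ Set.Icc (0:ℝ) t := ⟨le_refl 0, ht0⟩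
  have hSne : S.Nonempty := by
    have := hcov h0mem
    simp only [Set.mem_iUnion] at this
    obtain ⟨s, hs, -⟩ := this
    exact ⟨s, hs⟩
  refine ⟨S.sup' hSne (fun s => M s.1), fun u hu => ?_⟩
  have := hcov hu
  simp only [Set.mem_iUnion] at this
  obtain ⟨s, hsS, huV⟩ := this
  exact (hM s.1 s.2 u ⟨huV, hu⟩).trans (Finset.le_sup' (fun s => M s.1) hsS)

/-- **Lipschitz-type bounds for the one-sided reflection maps** (inequalities
(11)-(12) of the paper): for `x, x' ∈ D`, `κ, κ' ∈ ℝ` and `t ≥ 0`,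
`‖ψ_κ(x) − ψ_{κ'}(x')‖_t ≤ ‖x − x'‖_t + |κ − κ'|` and
`‖φ_κ(x) − φ_{κ'}(x')‖_t ≤ 2‖x − x'‖_t + |κ − κ'|`.  In particular, for
`κ = κ'` the maps `ψ_κ` and `φ_κ` are Lipschitz with constants `1` and `2`. -/
theorem reflection_map_lipschitz
    (x x' : ℝ → ℝ) (hx : Cadlag x) (hx' : Cadlag x') (κ κ' : ℝ)
    (t : ℝ) (ht : 0 ≤ t) :
    (unif (fun s => psiR κ x s - psiR κ' x' s) t ≤
        unif (fun s => x s - x' s) t + |κ - κ'|) ∧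
    (unif (fun s => phiR κ x s - phiR κ' x' s) t ≤
        2 * unif (fun s => x s - x' s) t + |κ - κ'|) ∧
    (κ = κ' →
      unif (fun s => psiR κ x s - psiR κ x' s) t ≤ unif (fun s => x s - x' s) t ∧
      unif (fun s => phiR κ x s - phiR κ x' s) t ≤ 2 * unif (fun s => x s - x' s) t) := by
  obtain ⟨Mx, hMx⟩ := cadlag_bdd x hx t
  obtain ⟨Mx', hMx'⟩ := cadlag_bdd x' hx' t
  haveI : Nonempty (Set.Icc (0:ℝ) t) := ⟨⟨0, le_refl 0, ht⟩⟩
  have hBd : BddAbove (Set.range fun u : Set.Icc (0:ℝ) t => |x u.1 - x' u.1|) := by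
    refine ⟨Mx + Mx', ?_⟩
    rintro _ ⟨u, rfl⟩
    calc |x u.1 - x' u.1| ≤ |x u.1| + |x' u.1| := abs_sub _ _
    _ ≤ Mx + Mx' := add_le_add (hMx _ u.2) (hMx' _ u.2)
  have hdle : ∀ u ∈ Set.Icc (0:ℝ) t, |x u - x' u| ≤ unif (fun s => x s - x' s) t :=
    fun u hu => le_ciSup hBd ⟨u, hu⟩
  set D := unif (fun s => x s - x' s) t with hD
  have oneside : ∀ (y y' : ℝ → ℝ) (c c' My' : ℝ),
      (∀ u ∈ Set.Icc (0:ℝ) t, |y' u| ≤ My') →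
      (∀ u ∈ Set.Icc (0:ℝ) t, |y u - y' u| ≤ D) →
      ∀ s ∈ Set.Icc (0:ℝ) t, psiR c y s ≤ psiR c' y' s + (D + |c - c'|) := by
    intro y y' c c' My' hb hd s hs
    haveI : Nonempty (Set.Icc (0:ℝ) s) := ⟨⟨0, le_refl 0, hs.1⟩⟩
    have hB' : BddAbove (Set.range fun u : Set.Icc (0:ℝ) s => max (y' u.1 - c') 0) := by
      refine ⟨My' + |c'|, ?_⟩
      rintro _ ⟨u, rfl⟩
      have hu : u.1 ∈ Set.Icc (0:ℝ) t := ⟨u.2.1, u.2.2.trans hs.2⟩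
      have h0 : 0 ≤ My' := (abs_nonneg _).trans (hb u.1 hu)
      refine max_le ?_ (add_nonneg h0 (abs_nonneg _))
      have h1 := hb u.1 hu
      have := le_abs_self (y' u.1)
      have := neg_abs_le c'
      linarith
    rw [psiR]
    refine ciSup_le fun u => ?_
    have hu : u.1 ∈ Set.Icc (0:ℝ) t := ⟨u.2.1, u.2.2.trans hs.2⟩
    have h1 : max (y u.1 - c) 0 ≤ max (y' u.1 - c') 0 + (|y u.1 - y' u.1| + |c - c'|) := by
      refine max_le ?_
        (add_nonneg (le_max_right _ _) (add_nonneg (abs_nonneg _) (abs_nonneg _)))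
      have := le_abs_self (y u.1 - y' u.1)
      have := le_abs_self (c' - c)
      have := abs_sub_comm c c'
      have := le_max_left (y' u.1 - c') 0
      linarith
    refine h1.trans ?_
    have h2 : max (y' u.1 - c') 0 ≤ psiR c' y' s := le_ciSup hB' u
    have h3 := hd u.1 hu
    linarith
  have habs : ∀ s ∈ Set.Icc (0:ℝ) t, |psiR κ x s - psiR κ' x' s| ≤ D + |κ - κ'| := by
    intro s hs
    rw [abs_sub_le_iff]
    constructor
    · have := oneside x x' κ κ' Mx' hMx' hdle s hs
      linarith
    · have := oneside x' x κ' κ Mx hMx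
        (fun u hu => by rw [abs_sub_comm]; exact hdle u hu) s hs
      rw [abs_sub_comm κ' κ] at this
      linarith
  have hphi : ∀ s ∈ Set.Icc (0:ℝ) t,
      |phiR κ x s - phiR κ' x' s| ≤ 2 * D + |κ - κ'| := by
    intro s hs
    have h1 := habs s hs
    have h2 := hdle s hs
    have heq : phiR κ x s - phiR κ' x' s
        = (x s - x' s) - (psiR κ x s - psiR κ' x' s) := by
      simp only [phiR]; ring
    rw [heq]
    have h3 : |(x s - x' s) - (psiR κ x s - psiR κ' x' s)|
        ≤ |x s - x' s| + |psiR κ x s - psiR κ' x' s| := by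
      rw [sub_eq_add_neg]
      exact (abs_add_le _ _).trans (by rw [abs_neg])
    linarith
  have hpsiU : unif (fun s => psiR κ x s - psiR κ' x' s) t ≤ D + |κ - κ'| := by
    rw [unif]; exact ciSup_le fun s => habs s.1 s.2
  have hphiU : unif (fun s => phiR κ x s - phiR κ' x' s) t ≤ 2 * D + |κ - κ'| := by
    rw [unif]; exact ciSup_le fun s => hphi s.1 s.2
  refine ⟨hpsiU, hphiU, fun hk => ?_⟩
  subst hk
  rw [sub_self, abs_zero, add_zero] at hpsiU hphiU
  exact ⟨hpsiU, hphiU⟩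
end
end
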